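/- arXiv:1608.06621 — 2 statements merged into one kernel-verified Lean document; each statement's English description precedes it below -/
import Mathlib

section
/- There exists a 3-tournament on a vertex set of 9 elements that has Property O (so n(3) ≤ 9, where n(3) is the minimum number of vertices in a 3-tournament with Property O). -/
/-- An ordered `k`-set (`k`-tuple of distinct elements of `V`), given as an
embedding `Fin k ↪ V`, is *consistent* with a (strict) linear order `r` on `V`
if its entries are increasing with respect to `r`. -/
def Consistent {k : ℕ} {V : Type*} (r : V → V → Prop) (e : Fin k ↪ V) : Prop :=
  ∀ i j : Fin k, i < j → r (e i) (e j)

/-- An *oriented `k`-uniform hypergraph* on `V`: a family of `k`-tuples of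
distinct elements of `V` (embeddings `Fin k ↪ V`) such that no two tuples have
the same underlying `k`-element set. -/
structure OrientedHypergraph (k : ℕ) (V : Type*) where
  edges : Finset (Fin k ↪ V)
  eq_of_range_eq : ∀ e ∈ edges, ∀ f ∈ edges, Set.range ⇑e = Set.range ⇑f → e = f

/-- *Property O*: for every linear order (given by its strict order relation `r`)
on the vertex set, some edge is consistent with it. -/
def PropertyO {k : ℕ} {V : Type*} (H : OrientedHypergraph k V) : Prop :=
  ∀ r : V → V → Prop, IsStrictTotalOrder V r → ∃ e ∈ H.edges, Consistent r e

/-- A *`k`-tournament*: an oriented `k`-uniform hypergraph containing a tuple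
for every `k`-element subset of the vertex set (such a tuple is unique by
`eq_of_range_eq`). -/
def IsTournament {k : ℕ} {V : Type*} (H : OrientedHypergraph k V) : Prop :=
  ∀ S : Finset V, S.card = k → ∃ e ∈ H.edges, Set.range ⇑e = ↑S

/-! ### Auxiliary construction for the 3-tournament on 9 vertices -/

/-- Bitmask encoding an orientation (increasing or decreasing) for each
3-element subset `{a < b < c}` of `Fin 9`, at bit `a*81 + b*9 + c`. -/
def pOMask : ℕ := 195299820805291262034066069734396442737610618767411009025698343462053483814193944843061423872800807083770731309404937816017203046444056879276032

/-- Orientation of the (sorted) triple `a < b < c`: `true` means the edge is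
the increasing tuple `(a,b,c)`, `false` means the decreasing tuple `(c,b,a)`. -/
def colorB (a b c : Fin 9) : Bool := pOMask.testBit ((a : ℕ) * 81 + (b : ℕ) * 9 + (c : ℕ))

/-- Whether a triple `(a,b,c)` occurring in this order in a linear order is
consistent with the chosen orientation of its underlying 3-set. -/
def orntB (a b c : Fin 9) : Bool :=
  if a < b ∧ b < c then colorB a b c
  else if c < b ∧ b < a then !(colorB c b a) else false

def tripleB : List (Fin 9) → Bool
  | [a, b, c] => orntB a b c
  | _ => false

/-- `l` contains (as a subsequence) a triple consistent with the orientation. -/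
def hasTripleB (l : List (Fin 9)) : Bool := (l.sublistsLen 3).any tripleB

def pairB (x : Fin 9) : List (Fin 9) → Bool
  | [u, v] => orntB u v x
  | _ => false

/-- Adding `x` after `placed` creates a consistent triple. -/
def hitB (placed : List (Fin 9)) (x : Fin 9) : Bool :=
  (placed.sublistsLen 2).any (pairB x)

/-- Pruned search over all permutations: `placed` is the prefix built so far,
`rem` the remaining elements. Returns `true` if every completion contains a
consistent triple. -/
def dfsPO : ℕ → List (Fin 9) → List (Fin 9) → Bool
  | 0, _, _ => false
  | (fuel + 1), rem, placed =>
    !rem.isEmpty && rem.all fun x => hitB placed x || dfsPO fuel (rem.erase x) (placed ++ [x])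

lemma hasTripleB_of_hitB {placed : List (Fin 9)} {x : Fin 9} (t : List (Fin 9))
    (h : hitB placed x = true) : hasTripleB (placed ++ x :: t) = true := by
  rw [hitB, List.any_eq_true] at h
  obtain ⟨p, hp, hpb⟩ := h
  obtain ⟨hsub, hlen⟩ := List.mem_sublistsLen.mp hp
  match p, hlen with
  | [u, v], _ =>
    rw [hasTripleB, List.any_eq_true]
    refine ⟨[u, v, x], List.mem_sublistsLen.mpr ⟨?_, rfl⟩, hpb⟩
    have h1 : List.Sublist ([u, v] ++ [x]) (placed ++ x :: t) :=
      List.Sublist.append hsub (by simp)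
    simpa using h1

lemma dfsPO_sound : ∀ (fuel : ℕ) (rem placed : List (Fin 9)), dfsPO fuel rem placed = true →
    ∀ l, l.Perm rem → hasTripleB (placed ++ l) = true := by
  intro fuel
  induction fuel with
  | zero => intro rem placed h; simp [dfsPO] at h
  | succ n ih =>
    intro rem placed h l hl
    rw [dfsPO, Bool.and_eq_true, List.all_eq_true] at h
    obtain ⟨hne, hall⟩ := h
    cases l with
    | nil =>
      exfalso
      have hnil : rem = [] := hl.symm.eq_nil
      simp [hnil] at hne
    | cons x t =>
      have hx : x ∈ rem := hl.subset (List.mem_cons_self)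
      have hperm : t.Perm (rem.erase x) :=
        List.Perm.cons_inv (hl.trans (List.perm_cons_erase hx))
      rcases Bool.or_eq_true _ _ |>.mp (hall x hx) with h1 | h1
      · exact hasTripleB_of_hitB t h1
      · have h2 := ih (rem.erase x) (placed ++ [x]) h1 t hperm
        simpa [List.append_assoc] using h2

set_option maxHeartbeats 2000000 in
lemma hasTripleB_of_perm (l : List (Fin 9)) (h : l.Perm (List.finRange 9)) :
    hasTripleB l = true := by
  have hd : dfsPO 10 (List.finRange 9) [] = true := by decide +kernel
  have h2 := dfsPO_sound 10 (List.finRange 9) [] hd l h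
  rwa [List.nil_append] at h2

/-- The oriented edge associated with a 3-element subset of `Fin 9`. -/
def edgeOf (S : Finset (Fin 9)) (h : S.card = 3) : Fin 3 ↪ Fin 9 :=
  if colorB (S.orderEmbOfFin h 0) (S.orderEmbOfFin h 1) (S.orderEmbOfFin h 2) then
    (S.orderEmbOfFin h).toEmbedding
  else
    ⟨fun i => S.orderEmbOfFin h i.rev,
      fun i j hij => Fin.rev_injective ((S.orderEmbOfFin h).injective hij)⟩

lemma range_edgeOf (S : Finset (Fin 9)) (h : S.card = 3) :
    Set.range ⇑(edgeOf S h) = ↑S := by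
  rw [edgeOf]
  split
  · exact S.range_orderEmbOfFin h
  · have h1 : Set.range (fun i : Fin 3 => S.orderEmbOfFin h i.rev)
        = Set.range ⇑(S.orderEmbOfFin h) := Fin.rev_surjective.range_comp _
    rw [show ⇑(⟨fun i : Fin 3 => S.orderEmbOfFin h i.rev,
        fun i j hij => Fin.rev_injective ((S.orderEmbOfFin h).injective hij)⟩ : Fin 3 ↪ Fin 9)
        = fun i : Fin 3 => S.orderEmbOfFin h i.rev from rfl, h1]
    exact S.range_orderEmbOfFin h

/-- The edge set of the 3-tournament on 9 vertices. -/
def edges9 : Finset (Fin 3 ↪ Fin 9) :=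
  (Finset.univ.powersetCard 3).attach.image fun S =>
    edgeOf S.1 ((Finset.mem_powersetCard.mp S.2).2)

lemma mem_edges9 (S : Finset (Fin 9)) (h : S.card = 3) : edgeOf S h ∈ edges9 :=
  Finset.mem_image.mpr
    ⟨⟨S, Finset.mem_powersetCard.mpr ⟨Finset.subset_univ _, h⟩⟩, Finset.mem_attach _ _, rfl⟩

/-- The non-strict relation associated with a strict relation `r`. -/
abbrev sOf (r : Fin 9 → Fin 9 → Prop) : Fin 9 → Fin 9 → Prop := fun x y => x = y ∨ r x y

/-- there is a `3`-tournament on `9` vertices with Property O. -/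
theorem three_tournament_on_nine :
    ∃ H : OrientedHypergraph 3 (Fin 9), IsTournament H ∧ PropertyO H := by
  classical
  refine ⟨⟨edges9, ?_⟩, ?_, ?_⟩
  · -- eq_of_range_eq
    intro e he f hf hr
    obtain ⟨⟨S, hS⟩, -, rfl⟩ := Finset.mem_image.mp he
    obtain ⟨⟨T, hT⟩, -, rfl⟩ := Finset.mem_image.mp hf
    rw [range_edgeOf, range_edgeOf] at hr
    have hST : S = T := Finset.coe_inj.mp hr
    subst hST
    rfl
  · -- IsTournament
    intro S hS
    exact ⟨edgeOf S hS, mem_edges9 S hS, range_edgeOf S hS⟩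
  · -- PropertyO
    intro r hSTO
    haveI := hSTO
    haveI : DecidableRel (sOf r) := fun a b => Classical.dec _
    haveI : IsTrans (Fin 9) (sOf r) := ⟨by
      rintro a b c (rfl | hab) (rfl | hbc)
      · exact Or.inl rfl
      · exact Or.inr hbc
      · exact Or.inr hab
      · exact Or.inr (hSTO.trans _ _ _ hab hbc)⟩
    haveI : IsAntisymm (Fin 9) (sOf r) := ⟨by
      rintro a b (rfl | hab) (h | hba)
      · rfl
      · rfl
      · exact h.symm
      · exact absurd (hSTO.trans _ _ _ hab hba) (hSTO.irrefl a)⟩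
    haveI : IsTotal (Fin 9) (sOf r) := ⟨by
      intro a b
      rcases trichotomous_of r a b with h | h | h
      · exact Or.inl (Or.inr h)
      · exact Or.inl (Or.inl h)
      · exact Or.inr (Or.inr h)⟩
    have hnodup : (Finset.sort Finset.univ (sOf r)).Nodup :=
      Finset.sort_nodup Finset.univ (sOf r)
    have hsorted : List.Pairwise (sOf r) (Finset.sort Finset.univ (sOf r)) :=
      Finset.pairwise_sort Finset.univ (sOf r)
    have hperm : (Finset.sort Finset.univ (sOf r)).Perm (List.finRange 9) := by
      rw [List.perm_ext_iff_of_nodup hnodup (List.nodup_finRange 9)]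
      intro x
      simp
    have htr := hasTripleB_of_perm _ hperm
    rw [hasTripleB, List.any_eq_true] at htr
    obtain ⟨t, ht, htb⟩ := htr
    obtain ⟨hsub, hlen⟩ := List.mem_sublistsLen.mp ht
    match t, hlen with
    | [a, b, c], _ =>
    have hpw : List.Pairwise (sOf r) [a, b, c] := List.Pairwise.sublist hsub hsorted
    have hnd : ([a, b, c] : List (Fin 9)).Nodup := List.Pairwise.sublist hsub hnodup
    have hsab : sOf r a b := (List.pairwise_cons.mp hpw).1 b (by simp)
    have hsac : sOf r a c := (List.pairwise_cons.mp hpw).1 c (by simp)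
    have hsbc : sOf r b c :=
      (List.pairwise_cons.mp (List.pairwise_cons.mp hpw).2).1 c (by simp)
    have hneab : a ≠ b := by intro h; rw [h] at hnd; simp at hnd
    have hneac : a ≠ c := by intro h; rw [h] at hnd; simp at hnd
    have hnebc : b ≠ c := by intro h; rw [h] at hnd; simp at hnd
    have hab : r a b := hsab.resolve_left hneab
    have hac : r a c := hsac.resolve_left hneac
    have hbc : r b c := hsbc.resolve_left hnebc
    rw [show tripleB [a, b, c] = orntB a b c from rfl, orntB] at htb
    split_ifs at htb with h1 h2
    · -- a < b < c naturally; the edge of {a,b,c} is the increasing tuple (a,b,c)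
      obtain ⟨hab', hbc'⟩ := h1
      have hcard : ({a, b, c} : Finset (Fin 9)).card = 3 :=
        Finset.card_eq_three.mpr ⟨a, b, c, ne_of_lt hab', ne_of_lt (hab'.trans hbc'),
          ne_of_lt hbc', rfl⟩
      have hkey : (![a, b, c] : Fin 3 → Fin 9)
          = ⇑(({a, b, c} : Finset (Fin 9)).orderEmbOfFin hcard) := by
        apply Finset.orderEmbOfFin_unique
        · intro x; fin_cases x <;> simp
        · intro i j hij
          fin_cases i <;> fin_cases j <;>
            first
            | exact absurd hij (by decide)
            | simpa using hab'
            | simpa using hbc'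
            | simpa using hab'.trans hbc'
      have e0 : ({a, b, c} : Finset (Fin 9)).orderEmbOfFin hcard 0 = a := by
        rw [← congrFun hkey 0]; rfl
      have e1 : ({a, b, c} : Finset (Fin 9)).orderEmbOfFin hcard 1 = b := by
        rw [← congrFun hkey 1]; rfl
      have e2 : ({a, b, c} : Finset (Fin 9)).orderEmbOfFin hcard 2 = c := by
        rw [← congrFun hkey 2]; rfl
      have hcol : colorB (({a, b, c} : Finset (Fin 9)).orderEmbOfFin hcard 0)
          (({a, b, c} : Finset (Fin 9)).orderEmbOfFin hcard 1)
          (({a, b, c} : Finset (Fin 9)).orderEmbOfFin hcard 2) = true := by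
        rw [e0, e1, e2]; exact htb
      have he : ⇑(edgeOf {a, b, c} hcard) = ![a, b, c] := by
        rw [edgeOf, if_pos hcol]
        exact hkey.symm
      refine ⟨edgeOf {a, b, c} hcard, mem_edges9 _ hcard, ?_⟩
      intro i j hij
      rw [he]
      fin_cases i <;> fin_cases j <;>
        first
        | exact absurd hij (by decide)
        | simpa using hab
        | simpa using hbc
        | simpa using hac
    · -- c < b < a naturally; the edge of {c,b,a} is the decreasing tuple (a,b,c)
      obtain ⟨hcb', hba'⟩ := h2
      have hcard : ({c, b, a} : Finset (Fin 9)).card = 3 :=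
        Finset.card_eq_three.mpr ⟨c, b, a, ne_of_lt hcb', ne_of_lt (hcb'.trans hba'),
          ne_of_lt hba', rfl⟩
      have hkey : (![c, b, a] : Fin 3 → Fin 9)
          = ⇑(({c, b, a} : Finset (Fin 9)).orderEmbOfFin hcard) := by
        apply Finset.orderEmbOfFin_unique
        · intro x; fin_cases x <;> simp
        · intro i j hij
          fin_cases i <;> fin_cases j <;>
            first
            | exact absurd hij (by decide)
            | simpa using hcb'
            | simpa using hba'
            | simpa using hcb'.trans hba'
      have e0 : ({c, b, a} : Finset (Fin 9)).orderEmbOfFin hcard 0 = c := by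
        rw [← congrFun hkey 0]; rfl
      have e1 : ({c, b, a} : Finset (Fin 9)).orderEmbOfFin hcard 1 = b := by
        rw [← congrFun hkey 1]; rfl
      have e2 : ({c, b, a} : Finset (Fin 9)).orderEmbOfFin hcard 2 = a := by
        rw [← congrFun hkey 2]; rfl
      have hcol : colorB (({c, b, a} : Finset (Fin 9)).orderEmbOfFin hcard 0)
          (({c, b, a} : Finset (Fin 9)).orderEmbOfFin hcard 1)
          (({c, b, a} : Finset (Fin 9)).orderEmbOfFin hcard 2) = false := by
        rw [e0, e1, e2]
        simpa using htb
      have he : ⇑(edgeOf {c, b, a} hcard) = ![a, b, c] := by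
        rw [edgeOf, if_neg (by rw [hcol]; exact Bool.false_ne_true)]
        show (fun i : Fin 3 => ({c, b, a} : Finset (Fin 9)).orderEmbOfFin hcard i.rev)
            = ![a, b, c]
        funext i
        fin_cases i
        · show ({c, b, a} : Finset (Fin 9)).orderEmbOfFin hcard (Fin.rev 0) = _
          rw [show (Fin.rev 0 : Fin 3) = 2 from rfl, e2]; rfl
        · show ({c, b, a} : Finset (Fin 9)).orderEmbOfFin hcard (Fin.rev 1) = _
          rw [show (Fin.rev 1 : Fin 3) = 1 from rfl, e1]; rfl
        · show ({c, b, a} : Finset (Fin 9)).orderEmbOfFin hcard (Fin.rev 2) = _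
          rw [show (Fin.rev 2 : Fin 3) = 0 from rfl, e0]; rfl
      refine ⟨edgeOf {c, b, a} hcard, mem_edges9 _ hcard, ?_⟩
      intro i j hij
      rw [he]
      fin_cases i <;> fin_cases j <;>
        first
        | exact absurd hij (by decide)
        | simpa using hab
        | simpa using hbc
        | simpa using hac
end

section
/- Every oriented 3-uniform hypergraph with Property O has strictly more than 6 edges; that is, f(3) > 6. -/
namespace F3
set_option linter.unusedSectionVars false
open Relation


variable {V : Type*} [Fintype V] [DecidableEq V]

/-- `u` comes before `v` in the tuple `e`. -/
def Before (e : Fin 3 ↪ V) (u v : V) : Prop :=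
  ∃ i j : Fin 3, i < j ∧ e i = u ∧ e j = v

/-- some pair of vertices is shared by `e` and `f` with opposite orders. -/
def Rev (e f : Fin 3 ↪ V) : Prop :=
  ∃ i j k l : Fin 3, i < j ∧ k < l ∧ e i = f l ∧ e j = f k

/-- orders (as equivs to `Fin n`) consistent with a tuple. -/
def Aset (e : Fin 3 ↪ V) : Finset (V ≃ Fin (Fintype.card V)) :=
  Finset.univ.filter fun σ => σ (e 0) < σ (e 1) ∧ σ (e 1) < σ (e 2)

lemma before_trans {e : Fin 3 ↪ V} {u v w : V} (h1 : Before e u v) (h2 : Before e v w) :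
    Before e u w := by
  obtain ⟨i, j, hij, rfl, rfl⟩ := h1
  obtain ⟨i', j', hij', hv, rfl⟩ := h2
  have : i' = j := e.injective hv
  subst this
  exact ⟨i, j', hij.trans hij', rfl, rfl⟩

lemma before_irrefl {e : Fin 3 ↪ V} {u : V} : ¬ Before e u u := by
  rintro ⟨i, j, hij, rfl, h⟩
  exact absurd (e.injective h) hij.ne'

lemma rev_intro {e f : Fin 3 ↪ V} {u w : V} (h1 : Before e u w) (h2 : Before f w u) :
    Rev e f := by
  obtain ⟨i, j, hij, rfl, rfl⟩ := h1
  obtain ⟨k, l, hkl, hk, hl⟩ := h2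
  exact ⟨i, j, k, l, hij, hkl, hl.symm, hk.symm⟩

lemma compat_of_not_rev (e f : Fin 3 ↪ V) (h : ¬ Rev e f) :
    ∃ σ : V ≃ Fin (Fintype.card V), σ ∈ Aset e ∧ σ ∈ Aset f := by
  classical
  set s : V → V → Prop := fun u v => Before e u v ∨ Before f u v with hs
  have hred : ∀ u v, TransGen s u v →
      Before e u v ∨ Before f u v ∨ (∃ w, Before e u w ∧ Before f w v) ∨
        (∃ w, Before f u w ∧ Before e w v) := by
    intro u v hTG
    induction hTG with
    | single h1 =>
      rcases h1 with h1 | h1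
      · exact Or.inl h1
      · exact Or.inr (Or.inl h1)
    | tail h1 h2 ih =>
      rename_i b c
      rcases ih with hE | hF | ⟨w, hE, hF⟩ | ⟨w, hF, hE⟩ <;> rcases h2 with h2 | h2
      · exact Or.inl (before_trans hE h2)
      · exact Or.inr (Or.inr (Or.inl ⟨b, hE, h2⟩))
      · exact Or.inr (Or.inr (Or.inr ⟨b, hF, h2⟩))
      · exact Or.inr (Or.inl (before_trans hF h2))
      · -- E u w, F w b, E b c : hard case
        obtain ⟨i0, j0, hij0, hu, hw⟩ := hE
        obtain ⟨i1, j1, hij1, hb, hc⟩ := h2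
        rcases lt_trichotomy j0 i1 with hlt | heq | hgt
        · exact Or.inl ⟨i0, j1, hij0.trans (hlt.trans hij1), hu, hc⟩
        · rw [heq, hb] at hw
          rw [← hw] at hF
          exact absurd hF before_irrefl
        · exact absurd (rev_intro ⟨i1, j0, hgt, hb, hw⟩ hF) h
      · exact Or.inr (Or.inr (Or.inl ⟨w, hE, before_trans hF h2⟩))
      · exact Or.inr (Or.inr (Or.inr ⟨w, hF, before_trans hE h2⟩))
      · -- F u w, E w b, F b c : hard case
        obtain ⟨k0, l0, hkl0, hu, hw⟩ := hF
        obtain ⟨k1, l1, hkl1, hb, hc⟩ := h2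
        rcases lt_trichotomy l0 k1 with hlt | heq | hgt
        · exact Or.inr (Or.inl ⟨k0, l1, hkl0.trans (hlt.trans hkl1), hu, hc⟩)
        · rw [heq, hb] at hw
          rw [← hw] at hE
          exact absurd hE before_irrefl
        · exact absurd (rev_intro hE ⟨k1, l0, hgt, hb, hw⟩) h
  have hanti : ∀ u v, ReflTransGen s u v → ReflTransGen s v u → u = v := by
    intro u v huv hvu
    by_contra hne
    have hTG : TransGen s u u := by
      rcases (reflTransGen_iff_eq_or_transGen.mp huv) with rfl | hT
      · exact absurd rfl hne
      · exact hT.trans_left hvu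
    rcases hred u u hTG with hE | hF | ⟨w, hE, hF⟩ | ⟨w, hF, hE⟩
    · exact absurd hE before_irrefl
    · exact absurd hF before_irrefl
    · exact h (rev_intro hE hF)
    · exact h (rev_intro hE hF)
  haveI hPO : IsPartialOrder V (ReflTransGen s) :=
    { refl := fun a => ReflTransGen.refl
      trans := fun a b c hab hbc => hab.trans hbc
      antisymm := hanti }
  obtain ⟨le, hlin, hext⟩ := extend_partialOrder (ReflTransGen s)
  haveI := hlin
  letI L : LinearOrder V :=
    { le := le
      le_refl := fun a => refl_of le a
      le_trans := fun a b c hab hbc => _root_.trans_of le hab hbc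
      le_antisymm := fun a b hab hba => antisymm_of le hab hba
      le_total := fun a b => total_of le a b
      toDecidableLE := fun a b => Classical.propDecidable _ }
  let σo : V ≃o Fin (Fintype.card V) := (monoEquivOfFin V rfl).symm
  have hlt : ∀ u v : V, u ≠ v → s u v → σo u < σo v := by
    intro u v hne hsuv
    have hle : le u v := hext _ _ (ReflTransGen.single hsuv)
    have : u < v := lt_of_le_of_ne hle hne
    exact σo.lt_iff_lt.mpr this
  have h01 : (0 : Fin 3) < 1 := by decide
  have h12 : (1 : Fin 3) < 2 := by decide
  refine ⟨σo.toEquiv, Finset.mem_filter.mpr ⟨Finset.mem_univ _, ?_, ?_⟩,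
    Finset.mem_filter.mpr ⟨Finset.mem_univ _, ?_, ?_⟩⟩
  · exact hlt _ _ (e.injective.ne h01.ne) (Or.inl ⟨0, 1, h01, rfl, rfl⟩)
  · exact hlt _ _ (e.injective.ne h12.ne) (Or.inl ⟨1, 2, h12, rfl, rfl⟩)
  · exact hlt _ _ (f.injective.ne h01.ne) (Or.inr ⟨0, 1, h01, rfl, rfl⟩)
  · exact hlt _ _ (f.injective.ne h12.ne) (Or.inr ⟨1, 2, h12, rfl, rfl⟩)

lemma strictMono3 {α} [Preorder α] {f : Fin 3 → α} (h1 : f 0 < f 1) (h2 : f 1 < f 2) :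
    StrictMono f := by
  intro i j hij
  fin_cases i <;> fin_cases j <;>
    first
      | exact h1 | exact h2 | exact h1.trans h2
      | exact absurd hij (by decide)

lemma card_aset (e : Fin 3 ↪ V) :
    6 * (Aset e).card = Fintype.card (V ≃ Fin (Fintype.card V)) := by
  classical
  set n := Fintype.card V
  -- tuple obtained by permuting e
  let ep : Equiv.Perm (Fin 3) → (Fin 3 ↪ V) := fun π => π.toEmbedding.trans e
  have hep : ∀ π i, (ep π) i = e (π i) := fun π i => rfl
  let sp : (V ≃ Fin n) → Equiv.Perm (Fin 3) := fun σ => Tuple.sort (⇑σ ∘ ⇑e)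
  have hmem : ∀ (σ : V ≃ Fin n) (π : Equiv.Perm (Fin 3)),
      σ ∈ Aset (ep π) ↔ sp σ = π := by
    intro σ π
    have hginj : Function.Injective (⇑σ ∘ ⇑e) := σ.injective.comp e.injective
    constructor
    · intro hσ
      rw [Aset, Finset.mem_filter] at hσ
      obtain ⟨-, hA, hB⟩ := hσ
      have hsm : StrictMono ((⇑σ ∘ ⇑e) ∘ ⇑π) := strictMono3 hA hB
      have h1 : Monotone ((⇑σ ∘ ⇑e) ∘ ⇑π) := hsm.monotone
      have h2 : Monotone ((⇑σ ∘ ⇑e) ∘ ⇑(Tuple.sort (⇑σ ∘ ⇑e))) := Tuple.monotone_sort _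
      have := Tuple.unique_monotone h2 h1
      have hco : ⇑(sp σ) = ⇑π := by
        funext i
        exact hginj (congrFun this i)
      exact Equiv.coe_fn_injective hco
    · rintro rfl
      have h2 : Monotone ((⇑σ ∘ ⇑e) ∘ ⇑(Tuple.sort (⇑σ ∘ ⇑e))) := Tuple.monotone_sort _
      have hsm : StrictMono ((⇑σ ∘ ⇑e) ∘ ⇑(sp σ)) :=
        h2.strictMono_of_injective (hginj.comp (Equiv.injective _))
      refine Finset.mem_filter.mpr ⟨Finset.mem_univ _, ?_, ?_⟩
      · exact hsm (show (0 : Fin 3) < 1 by decide)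
      · exact hsm (show (1 : Fin 3) < 2 by decide)
  have hcard : ∀ π : Equiv.Perm (Fin 3), (Aset (ep π)).card = (Aset e).card := by
    intro π
    let τ : Equiv.Perm V := (π⁻¹).viaEmbedding e
    have hτ : ∀ x : Fin 3, τ (e (π x)) = e x := by
      intro x
      rw [Equiv.Perm.viaEmbedding_apply, Equiv.Perm.inv_def, Equiv.symm_apply_apply]
    have hτs : ∀ x : Fin 3, τ.symm (e x) = e (π x) := by
      intro x; rw [Equiv.symm_apply_eq, hτ]
    refine Finset.card_bij' (fun σ _ => τ.symm.trans σ) (fun σ _ => τ.trans σ) ?_ ?_ ?_ ?_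
    · intro σ hσ
      rw [Aset, Finset.mem_filter] at hσ ⊢
      obtain ⟨-, hA, hB⟩ := hσ
      simp only [hep] at hA hB
      refine ⟨Finset.mem_univ _, ?_, ?_⟩ <;>
        simp only [Equiv.trans_apply, hτs] <;> assumption
    · intro σ hσ
      rw [Aset, Finset.mem_filter] at hσ ⊢
      obtain ⟨-, hA, hB⟩ := hσ
      refine ⟨Finset.mem_univ _, ?_, ?_⟩ <;>
        simp only [hep, Equiv.trans_apply, hτ] <;> assumption
    · intro σ _; ext x; simp
    · intro σ _; ext x; simp
  have hfib := Finset.card_eq_sum_card_fiberwise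
    (f := sp) (s := (Finset.univ : Finset (V ≃ Fin n))) (t := Finset.univ)
    (fun x _ => Finset.mem_univ _)
  have hfilter : ∀ π : Equiv.Perm (Fin 3),
      (Finset.univ.filter fun σ : V ≃ Fin n => sp σ = π) = Aset (ep π) := by
    intro π
    ext σ
    simp only [Finset.mem_filter, Finset.mem_univ, true_and, hmem]
  have h6 : Fintype.card (Equiv.Perm (Fin 3)) = 6 := by
    simp [Fintype.card_perm]
    rfl
  have h' : (Finset.univ : Finset (V ≃ Fin n)).card = 6 * (Aset e).card := by
    rw [hfib]
    calc ∑ π : Equiv.Perm (Fin 3), (Finset.filter (fun σ => sp σ = π) Finset.univ).card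
        = ∑ _π : Equiv.Perm (Fin 3), (Aset e).card :=
          Finset.sum_congr rfl (fun π _ => by rw [hfilter, hcard])
      _ = 6 * (Aset e).card := by
          rw [Finset.sum_const, Finset.card_univ, h6, smul_eq_mul]
  rw [← h', Finset.card_univ]

lemma cover (H : OrientedHypergraph 3 V) (hO : PropertyO H)
    (σ : V ≃ Fin (Fintype.card V)) : ∃ e ∈ H.edges, σ ∈ Aset e := by
  have hsto : IsStrictTotalOrder V (fun x y => σ x < σ y) :=
    { trichotomous := fun a b h1 h2 => σ.injective (le_antisymm (not_lt.mp h2) (not_lt.mp h1))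
      irrefl := fun a => lt_irrefl _
      trans := fun a b c => lt_trans }
  obtain ⟨e, he, hc⟩ := hO _ hsto
  exact ⟨e, he, Finset.mem_filter.mpr ⟨Finset.mem_univ _,
    hc 0 1 (by decide), hc 1 2 (by decide)⟩⟩

def Rset (g : Fin 3 ↪ V) : Finset V := {g 0, g 1, g 2}

lemma mem_Rset (g : Fin 3 ↪ V) (i : Fin 3) : g i ∈ Rset g := by
  fin_cases i <;> simp [Rset]

lemma card_Rset (g : Fin 3 ↪ V) : (Rset g).card = 3 :=
  Finset.card_eq_three.mpr ⟨g 0, g 1, g 2, g.injective.ne (by decide),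
    g.injective.ne (by decide), g.injective.ne (by decide), rfl⟩

lemma range_eq_Rset (g : Fin 3 ↪ V) : Set.range ⇑g = ↑(Rset g) := by
  ext x
  constructor
  · rintro ⟨i, rfl⟩
    fin_cases i <;> simp [Rset]
  · intro hx
    simp only [Rset, Finset.coe_insert, Set.mem_insert_iff, Finset.coe_singleton,
      Set.mem_singleton_iff] at hx
    rcases hx with rfl | rfl | rfl
    · exact ⟨0, rfl⟩
    · exact ⟨1, rfl⟩
    · exact ⟨2, rfl⟩

set_option maxHeartbeats 1000000 in
lemma finish (edges : Finset (Fin 3 ↪ V))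
    (huniq : ∀ e ∈ edges, ∀ f ∈ edges, Set.range ⇑e = Set.range ⇑f → e = f)
    (hcard : edges.card = 6)
    (hrev : ∀ e ∈ edges, ∀ f ∈ edges, e ≠ f → Rev e f) : False := by
  classical
  have hRne : ∀ e ∈ edges, ∀ f ∈ edges, e ≠ f → Rset e ≠ Rset f := by
    intro e he f hf hef hR
    exact hef (huniq e he f hf (by rw [range_eq_Rset, range_eq_Rset, hR]))
  have hint2 : ∀ e ∈ edges, ∀ f ∈ edges, e ≠ f → (Rset e ∩ Rset f).card = 2 := by
    intro e he f hf hef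
    obtain ⟨i, j, k, l, hij, hkl, h1, h2⟩ := hrev e he f hf hef
    have h2le : 2 ≤ (Rset e ∩ Rset f).card := by
      have hsub : ({e i, e j} : Finset V) ⊆ Rset e ∩ Rset f := by
        intro x hx
        rcases Finset.mem_insert.mp hx with rfl | hx
        · exact Finset.mem_inter.mpr ⟨mem_Rset e i, h1 ▸ mem_Rset f l⟩
        · rw [Finset.mem_singleton.mp hx]
          exact Finset.mem_inter.mpr ⟨mem_Rset e j, h2 ▸ mem_Rset f k⟩
      calc 2 = ({e i, e j} : Finset V).card := by
              rw [Finset.card_insert_of_notMem (by simp [e.injective.ne hij.ne]),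
                Finset.card_singleton]
        _ ≤ _ := Finset.card_le_card hsub
    have hne3 : (Rset e ∩ Rset f).card ≠ 3 := by
      intro h3
      have he' : Rset e ∩ Rset f = Rset e :=
        Finset.eq_of_subset_of_card_le Finset.inter_subset_left (by rw [h3, card_Rset])
      have hf' : Rset e ∩ Rset f = Rset f :=
        Finset.eq_of_subset_of_card_le Finset.inter_subset_right (by rw [h3, card_Rset])
      exact hRne e he f hf hef (he' ▸ hf')
    have hle3 : (Rset e ∩ Rset f).card ≤ 3 := by
      calc (Rset e ∩ Rset f).card ≤ (Rset e).card := Finset.card_le_card Finset.inter_subset_left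
        _ = 3 := card_Rset e
    omega
  obtain ⟨e1, he1, e2, he2, hne⟩ := Finset.one_lt_card.mp (by omega : 1 < edges.card)
  obtain ⟨p, q, hpq, hI⟩ := Finset.card_eq_two.mp (hint2 e1 he1 e2 he2 hne)
  have hp1 : p ∈ Rset e1 := (Finset.mem_inter.mp (hI ▸ Finset.mem_insert_self p {q})).1
  have hp2 : p ∈ Rset e2 := (Finset.mem_inter.mp (hI ▸ Finset.mem_insert_self p {q})).2
  have hq1 : q ∈ Rset e1 :=
    (Finset.mem_inter.mp (hI ▸ Finset.mem_insert_of_mem (Finset.mem_singleton_self q))).1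
  have hq2 : q ∈ Rset e2 :=
    (Finset.mem_inter.mp (hI ▸ Finset.mem_insert_of_mem (Finset.mem_singleton_self q))).2
  have hpqsub1 : ({p, q} : Finset V) ⊆ Rset e1 := by
    intro x hx; rcases Finset.mem_insert.mp hx with rfl | hx
    · exact hp1
    · rw [Finset.mem_singleton.mp hx]; exact hq1
  have hpqsub2 : ({p, q} : Finset V) ⊆ Rset e2 := by
    intro x hx; rcases Finset.mem_insert.mp hx with rfl | hx
    · exact hp2
    · rw [Finset.mem_singleton.mp hx]; exact hq2
  have hpqcard : ({p, q} : Finset V).card = 2 := by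
    rw [Finset.card_insert_of_notMem (by simp [hpq]), Finset.card_singleton]
  -- third vertices r (of e1) and t (of e2)
  obtain ⟨r, hr⟩ : ∃ r, Rset e1 \ {p, q} = {r} := by
    apply Finset.card_eq_one.mp
    rw [Finset.card_sdiff_of_subset hpqsub1, card_Rset, hpqcard]
  obtain ⟨t, ht⟩ : ∃ t, Rset e2 \ {p, q} = {t} := by
    apply Finset.card_eq_one.mp
    rw [Finset.card_sdiff_of_subset hpqsub2, card_Rset, hpqcard]
  have hrmem : r ∈ Rset e1 ∧ r ∉ ({p, q} : Finset V) :=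
    Finset.mem_sdiff.mp (hr ▸ Finset.mem_singleton_self r)
  have htmem : t ∈ Rset e2 ∧ t ∉ ({p, q} : Finset V) :=
    Finset.mem_sdiff.mp (ht ▸ Finset.mem_singleton_self t)
  have hre1 : Rset e1 = insert r {p, q} := by
    rw [Finset.insert_eq, ← hr, Finset.sdiff_union_of_subset hpqsub1]
  have hte2 : Rset e2 = insert t {p, q} := by
    rw [Finset.insert_eq, ← ht, Finset.sdiff_union_of_subset hpqsub2]
  have hrp : r ≠ p := by intro h; apply hrmem.2; simp [h]
  have hrq : r ≠ q := by intro h; apply hrmem.2; simp [h]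
  have htp : t ≠ p := by intro h; apply htmem.2; simp [h]
  have htq : t ≠ q := by intro h; apply htmem.2; simp [h]
  have hrt : r ≠ t := by
    intro h
    exact hRne e1 he1 e2 he2 hne (by rw [hre1, hte2, h])
  have hre2 : r ∉ Rset e2 := by
    intro hmem
    have : r ∈ ({p, q} : Finset V) := hI ▸ Finset.mem_inter.mpr ⟨hrmem.1, hmem⟩
    exact hrmem.2 this
  have hte1 : t ∉ Rset e1 := by
    intro hmem
    have : t ∈ ({p, q} : Finset V) := hI ▸ Finset.mem_inter.mpr ⟨hmem, htmem.1⟩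
    exact htmem.2 this
  -- every edge missing p or q has vertex set {p,r,t} or {q,r,t}
  set Bad := edges.filter (fun g => ¬(p ∈ Rset g ∧ q ∈ Rset g)) with hBad
  have hbadsets : ∀ g ∈ Bad, Rset g = insert p {r, t} ∨ Rset g = insert q {r, t} := by
    intro g hg
    obtain ⟨hgE, hgn⟩ := Finset.mem_filter.mp hg
    have hge1 : g ≠ e1 := fun h => hgn (h ▸ ⟨hp1, hq1⟩)
    have hge2 : g ≠ e2 := fun h => hgn (h ▸ ⟨hp2, hq2⟩)
    have hc1 := hint2 g hgE e1 he1 hge1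
    have hc2 := hint2 g hgE e2 he2 hge2
    by_cases hp : p ∈ Rset g
    · have hq : q ∉ Rset g := fun hq => hgn ⟨hp, hq⟩
      -- intersection with e1 is {p, r}
      have hsub1 : Rset g ∩ Rset e1 ⊆ {p, r} := by
        intro x hx
        obtain ⟨hxg, hx1⟩ := Finset.mem_inter.mp hx
        rw [hre1] at hx1
        rcases Finset.mem_insert.mp hx1 with rfl | hx1
        · exact Finset.mem_insert_of_mem (Finset.mem_singleton_self x)
        · rcases Finset.mem_insert.mp hx1 with rfl | hx1
          · exact Finset.mem_insert_self x _
          · rw [Finset.mem_singleton.mp hx1] at hxg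
            exact absurd hxg hq
      have hrg : r ∈ Rset g := by
        have hcard' : ({p, r} : Finset V).card ≤ (Rset g ∩ Rset e1).card := by
          rw [hc1, Finset.card_insert_of_notMem (by simp [Ne.symm hrp]),
            Finset.card_singleton]
        have := Finset.eq_of_subset_of_card_le hsub1 hcard'
        have : r ∈ Rset g ∩ Rset e1 := by
          rw [this]; exact Finset.mem_insert_of_mem (Finset.mem_singleton_self r)
        exact (Finset.mem_inter.mp this).1
      have hsub2 : Rset g ∩ Rset e2 ⊆ {p, t} := by
        intro x hx
        obtain ⟨hxg, hx2⟩ := Finset.mem_inter.mp hx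
        rw [hte2] at hx2
        rcases Finset.mem_insert.mp hx2 with rfl | hx2
        · exact Finset.mem_insert_of_mem (Finset.mem_singleton_self x)
        · rcases Finset.mem_insert.mp hx2 with rfl | hx2
          · exact Finset.mem_insert_self x _
          · rw [Finset.mem_singleton.mp hx2] at hxg
            exact absurd hxg hq
      have htg : t ∈ Rset g := by
        have hcard' : ({p, t} : Finset V).card ≤ (Rset g ∩ Rset e2).card := by
          rw [hc2, Finset.card_insert_of_notMem (by simp [Ne.symm htp]),
            Finset.card_singleton]
        have := Finset.eq_of_subset_of_card_le hsub2 hcard'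
        have : t ∈ Rset g ∩ Rset e2 := by
          rw [this]; exact Finset.mem_insert_of_mem (Finset.mem_singleton_self t)
        exact (Finset.mem_inter.mp this).1
      left
      refine (Finset.eq_of_subset_of_card_le ?_ ?_).symm
      · intro x hx
        rcases Finset.mem_insert.mp hx with rfl | hx
        · exact hp
        · rcases Finset.mem_insert.mp hx with rfl | hx
          · exact hrg
          · rw [Finset.mem_singleton.mp hx]; exact htg
      · have h3 : ({p, r, t} : Finset V).card = 3 :=
          Finset.card_eq_three.mpr ⟨p, r, t, Ne.symm hrp, Ne.symm htp, hrt, rfl⟩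
        rw [card_Rset, h3]
    · have hq : q ∈ Rset g := by
        by_contra hq
        -- intersection with e1 inside {r} : too small
        have hsub1 : Rset g ∩ Rset e1 ⊆ {r} := by
          intro x hx
          obtain ⟨hxg, hx1⟩ := Finset.mem_inter.mp hx
          rw [hre1] at hx1
          rcases Finset.mem_insert.mp hx1 with rfl | hx1
          · exact Finset.mem_singleton_self x
          · rcases Finset.mem_insert.mp hx1 with rfl | hx1
            · exact absurd hxg hp
            · rw [Finset.mem_singleton.mp hx1] at hxg
              exact absurd hxg hq
        have := Finset.card_le_card hsub1
        rw [hc1, Finset.card_singleton] at this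
        omega
      have hsub1 : Rset g ∩ Rset e1 ⊆ {q, r} := by
        intro x hx
        obtain ⟨hxg, hx1⟩ := Finset.mem_inter.mp hx
        rw [hre1] at hx1
        rcases Finset.mem_insert.mp hx1 with rfl | hx1
        · exact Finset.mem_insert_of_mem (Finset.mem_singleton_self x)
        · rcases Finset.mem_insert.mp hx1 with rfl | hx1
          · exact absurd hxg hp
          · rw [Finset.mem_singleton.mp hx1]
            exact Finset.mem_insert_self q _
      have hrg : r ∈ Rset g := by
        have hcard' : ({q, r} : Finset V).card ≤ (Rset g ∩ Rset e1).card := by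
          rw [hc1, Finset.card_insert_of_notMem (by simp [Ne.symm hrq]),
            Finset.card_singleton]
        have := Finset.eq_of_subset_of_card_le hsub1 hcard'
        have : r ∈ Rset g ∩ Rset e1 := by
          rw [this]; exact Finset.mem_insert_of_mem (Finset.mem_singleton_self r)
        exact (Finset.mem_inter.mp this).1
      have hsub2 : Rset g ∩ Rset e2 ⊆ {q, t} := by
        intro x hx
        obtain ⟨hxg, hx2⟩ := Finset.mem_inter.mp hx
        rw [hte2] at hx2
        rcases Finset.mem_insert.mp hx2 with rfl | hx2
        · exact Finset.mem_insert_of_mem (Finset.mem_singleton_self x)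
        · rcases Finset.mem_insert.mp hx2 with rfl | hx2
          · exact absurd hxg hp
          · rw [Finset.mem_singleton.mp hx2]
            exact Finset.mem_insert_self q _
      have htg : t ∈ Rset g := by
        have hcard' : ({q, t} : Finset V).card ≤ (Rset g ∩ Rset e2).card := by
          rw [hc2, Finset.card_insert_of_notMem (by simp [Ne.symm htq]),
            Finset.card_singleton]
        have := Finset.eq_of_subset_of_card_le hsub2 hcard'
        have : t ∈ Rset g ∩ Rset e2 := by
          rw [this]; exact Finset.mem_insert_of_mem (Finset.mem_singleton_self t)
        exact (Finset.mem_inter.mp this).1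
      right
      refine (Finset.eq_of_subset_of_card_le ?_ ?_).symm
      · intro x hx
        rcases Finset.mem_insert.mp hx with rfl | hx
        · exact hq
        · rcases Finset.mem_insert.mp hx with rfl | hx
          · exact hrg
          · rw [Finset.mem_singleton.mp hx]; exact htg
      · have h3 : ({q, r, t} : Finset V).card = 3 :=
          Finset.card_eq_three.mpr ⟨q, r, t, Ne.symm hrq, Ne.symm htq, hrt, rfl⟩
        rw [card_Rset, h3]
  have hbadcard : Bad.card ≤ 2 := by
    have hmaps : ∀ g ∈ Bad, Rset g ∈ ({insert p {r, t}, insert q {r, t}} : Finset (Finset V)) := by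
      intro g hg
      rcases hbadsets g hg with h | h
      · rw [h]; exact Finset.mem_insert_self _ _
      · rw [h]; exact Finset.mem_insert_of_mem (Finset.mem_singleton_self _)
    have hinj : Set.InjOn Rset (Bad : Set (Fin 3 ↪ V)) := by
      intro g1 hg1 g2 hg2 hR
      by_contra hne'
      exact hRne g1 (Finset.mem_of_mem_filter _ hg1) g2 (Finset.mem_of_mem_filter _ hg2) hne' hR
    calc Bad.card ≤ ({insert p {r, t}, insert q {r, t}} : Finset (Finset V)).card :=
          Finset.card_le_card_of_injOn Rset hmaps hinj
      _ ≤ 2 := by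
          have := Finset.card_insert_le (insert p {r, t}) ({insert q {r, t}} : Finset (Finset V))
          simp only [Finset.card_singleton] at this
          omega
  set G := edges.filter (fun g => p ∈ Rset g ∧ q ∈ Rset g) with hG
  have hGcard : 2 < G.card := by
    have hsplit : G.card + Bad.card = 6 := by
      rw [hG, hBad, ← hcard]
      exact Finset.card_filter_add_card_filter_not
        (p := fun g => p ∈ Rset g ∧ q ∈ Rset g)
    omega
  obtain ⟨g1, g2, g3, hg1, hg2, hg3, h12, h13, h23⟩ := Finset.two_lt_card_iff.mp hGcard
  -- the orientation of (p, q) in an edge of G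
  set B : (Fin 3 ↪ V) → Prop := fun g => ∃ i j : Fin 3, i < j ∧ g i = p ∧ g j = q with hB
  have hpair : ∀ g ∈ G, ∀ g' ∈ G, g ≠ g' → (B g ↔ ¬ B g') := by
    intro g hg g' hg' hgg'
    obtain ⟨hgE, hpg, hqg⟩ := Finset.mem_filter.mp hg
    obtain ⟨hg'E, hpg', hqg'⟩ := Finset.mem_filter.mp hg'
    have hI' : Rset g ∩ Rset g' = {p, q} := by
      refine (Finset.eq_of_subset_of_card_le ?_ ?_).symm
      · intro x hx
        rcases Finset.mem_insert.mp hx with rfl | hx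
        · exact Finset.mem_inter.mpr ⟨hpg, hpg'⟩
        · rw [Finset.mem_singleton.mp hx]
          exact Finset.mem_inter.mpr ⟨hqg, hqg'⟩
      · rw [hint2 g hgE g' hg'E hgg', hpqcard]
    obtain ⟨i, j, k, l, hij, hkl, h1, h2⟩ := hrev g hgE g' hg'E hgg'
    have hu : g i ∈ ({p, q} : Finset V) := by
      rw [← hI']
      exact Finset.mem_inter.mpr ⟨mem_Rset g i, h1 ▸ mem_Rset g' l⟩
    have hw : g j ∈ ({p, q} : Finset V) := by
      rw [← hI']
      exact Finset.mem_inter.mpr ⟨mem_Rset g j, h2 ▸ mem_Rset g' k⟩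
    have huw : g i ≠ g j := g.injective.ne hij.ne
    rcases Finset.mem_insert.mp hu with hup | hu
    · -- g i = p, hence g j = q : B g and ¬ B g'
      have hwq : g j = q := by
        rcases Finset.mem_insert.mp hw with h | h
        · exact absurd (h.trans hup.symm) huw.symm
        · exact Finset.mem_singleton.mp h
      have hBg : B g := ⟨i, j, hij, hup, hwq⟩
      have hnBg' : ¬ B g' := by
        rintro ⟨k', l', hk'l', hp', hq'⟩
        have hk' : k' = l := g'.injective (by rw [hp', ← hup, h1])
        have hl' : l' = k := g'.injective (by rw [hq', ← hwq, h2])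
        rw [hk', hl'] at hk'l'
        exact absurd hkl (asymm hk'l')
      constructor
      · intro _; exact hnBg'
      · intro _; exact hBg
    · have huq : g i = q := Finset.mem_singleton.mp hu
      have hwp : g j = p := by
        rcases Finset.mem_insert.mp hw with h | h
        · exact h
        · exact absurd ((Finset.mem_singleton.mp h).trans huq.symm) huw.symm
      have hBg' : B g' := ⟨k, l, hkl, by rw [← h2, hwp], by rw [← h1, huq]⟩
      have hnBg : ¬ B g := by
        rintro ⟨i', j', hi'j', hp', hq'⟩
        have hi' : i' = j := g.injective (hp'.trans hwp.symm)
        have hj' : j' = i := g.injective (hq'.trans huq.symm)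
        rw [hi', hj'] at hi'j'
        exact absurd hij (asymm hi'j')
      constructor
      · intro hBg; exact absurd hBg hnBg
      · intro h'; exact absurd hBg' h'
  have p12 := hpair g1 hg1 g2 hg2 h12
  have p13 := hpair g1 hg1 g3 hg3 h13
  have p23 := hpair g2 hg2 g3 hg3 h23
  by_cases hb : B g1
  · exact (p12.mp hb) (p23.mpr (p13.mp hb))
  · have hb2 : B g2 := not_not.mp (fun h2 => hb (p12.mpr h2))
    have hb3 : B g3 := not_not.mp (fun h3 => hb (p13.mpr h3))
    exact (p23.mp hb2) hb3

end F3

/-- every oriented `3`-uniform hypergraph with Property O has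
strictly more than `6` edges, i.e. `f(3) > 6`. -/
theorem f_three_gt_six {V : Type*} [Fintype V]
    (H : OrientedHypergraph 3 V) (hO : PropertyO H) :
    6 < H.edges.card := by
  classical
  by_contra hle
  push_neg at hle
  set N := Fintype.card (V ≃ Fin (Fintype.card V)) with hN
  have hNpos : 0 < N := Fintype.card_pos_iff.mpr ⟨Fintype.equivFin V⟩
  have hcover : ∀ σ : V ≃ Fin (Fintype.card V), ∃ e ∈ H.edges, σ ∈ F3.Aset e :=
    F3.cover H hO
  have hS1 : N ≤ ∑ e ∈ H.edges, (F3.Aset e).card := by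
    have hsub : (Finset.univ : Finset (V ≃ Fin (Fintype.card V))) ⊆
        H.edges.biUnion (fun e => F3.Aset e) := by
      intro σ _
      obtain ⟨e, he, hσ⟩ := hcover σ
      exact Finset.mem_biUnion.mpr ⟨e, he, hσ⟩
    calc N = (Finset.univ : Finset (V ≃ Fin (Fintype.card V))).card :=
          (Finset.card_univ).symm
      _ ≤ (H.edges.biUnion (fun e => F3.Aset e)).card := Finset.card_le_card hsub
      _ ≤ ∑ e ∈ H.edges, (F3.Aset e).card := Finset.card_biUnion_le
  have hS2 : 6 * ∑ e ∈ H.edges, (F3.Aset e).card = H.edges.card * N := by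
    rw [Finset.mul_sum, Finset.sum_congr rfl (fun e _ => F3.card_aset e),
      Finset.sum_const, smul_eq_mul]
  have h6N : 6 * ∑ e ∈ H.edges, (F3.Aset e).card ≤ 6 * N := by
    rw [hS2]
    exact Nat.mul_le_mul_right N hle
  have hSN : (∑ e ∈ H.edges, (F3.Aset e).card) = N :=
    le_antisymm (by omega) hS1
  have hcard6 : H.edges.card = 6 := by
    have : H.edges.card * N = 6 * N := by rw [← hS2, hSN]
    exact Nat.eq_of_mul_eq_mul_right hNpos this
  -- exactness: no order is consistent with two distinct edges
  have hdisj : ∀ e ∈ H.edges, ∀ f ∈ H.edges, e ≠ f →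
      ∀ σ : V ≃ Fin (Fintype.card V), ¬(σ ∈ F3.Aset e ∧ σ ∈ F3.Aset f) := by
    rintro e he f hf hef σ0 ⟨hσe, hσf⟩
    have hone : ∀ σ : V ≃ Fin (Fintype.card V),
        1 ≤ (H.edges.filter (fun g => σ ∈ F3.Aset g)).card := by
      intro σ
      obtain ⟨g, hg, hσ⟩ := hcover σ
      exact Finset.card_pos.mpr ⟨g, Finset.mem_filter.mpr ⟨hg, hσ⟩⟩
    have htwo : 1 < (H.edges.filter (fun g => σ0 ∈ F3.Aset g)).card :=
      Finset.one_lt_card.mpr ⟨e, Finset.mem_filter.mpr ⟨he, hσe⟩,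
        f, Finset.mem_filter.mpr ⟨hf, hσf⟩, hef⟩
    have hAcard : ∀ g : Fin 3 ↪ V, (F3.Aset g).card =
        ∑ σ : V ≃ Fin (Fintype.card V), if σ ∈ F3.Aset g then 1 else 0 := by
      intro g
      rw [← Finset.card_filter, Finset.filter_mem_eq_inter, Finset.univ_inter]
    have hswap : (∑ g ∈ H.edges, (F3.Aset g).card) =
        ∑ σ : V ≃ Fin (Fintype.card V),
          (H.edges.filter (fun g => σ ∈ F3.Aset g)).card := by
      calc (∑ g ∈ H.edges, (F3.Aset g).card)
          = ∑ g ∈ H.edges, ∑ σ : V ≃ Fin (Fintype.card V),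
              if σ ∈ F3.Aset g then 1 else 0 :=
            Finset.sum_congr rfl (fun g _ => hAcard g)
        _ = ∑ σ : V ≃ Fin (Fintype.card V), ∑ g ∈ H.edges,
              if σ ∈ F3.Aset g then 1 else 0 := Finset.sum_comm
        _ = ∑ σ : V ≃ Fin (Fintype.card V),
              (H.edges.filter (fun g => σ ∈ F3.Aset g)).card :=
            Finset.sum_congr rfl (fun σ _ => (Finset.card_filter _ _).symm)
    have hlt : (∑ _σ : V ≃ Fin (Fintype.card V), 1) <
        ∑ σ : V ≃ Fin (Fintype.card V),
          (H.edges.filter (fun g => σ ∈ F3.Aset g)).card :=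
      Finset.sum_lt_sum (fun σ _ => hone σ) ⟨σ0, Finset.mem_univ _, htwo⟩
    rw [Finset.sum_const, smul_eq_mul, mul_one, Finset.card_univ] at hlt
    rw [hswap] at hSN
    omega
  have hrev : ∀ e ∈ H.edges, ∀ f ∈ H.edges, e ≠ f → F3.Rev e f := by
    intro e he f hf hef
    by_contra hnrev
    obtain ⟨σ, h1, h2⟩ := F3.compat_of_not_rev e f hnrev
    exact hdisj e he f hf hef σ ⟨h1, h2⟩
  exact F3.finish H.edges H.eq_of_range_eq hcard6 hrev
end
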